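/- If X₁ and X₂ are independent integer-valued random variables with finitely supported #-log-concave probability mass functions f₁ and f₂, then the convolution f₁ ⋆ f₂ is majorized by the convolution f₁^# ⋆ f₂^#. -/

import Mathlib

noncomputable section

def Majorized (f g : ℤ → ℝ) : Prop :=
  (∀ s : Finset ℤ, ∃ t : Finset ℤ, t.card = s.card ∧ ∑ i ∈ s, f i ≤ ∑ i ∈ t, g i)
  ∧ ∑' i, f i = ∑' i, g i

def IsPMF (f : ℤ → ℝ) : Prop := (∀ i, 0 ≤ f i) ∧ ∑' i, f i = 1

/-- The squeezed rearrangement `f^#`: if the support of `f` is `{x₀ < x₁ < ⋯ < x_n}`, then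
`f^#(r) = f(x_r)` for `0 ≤ r ≤ n` and `f^#(r) = 0` otherwise. -/
def hashFn (f : ℤ → ℝ) (hf : (Function.support f).Finite) : ℤ → ℝ := fun r =>
  if h : 0 ≤ r ∧ r.toNat < hf.toFinset.card then
    f ((hf.toFinset.sort (· ≤ ·)).get ⟨r.toNat, by simpa [Finset.length_sort] using h.2⟩)
  else 0

/-- `f` is #-log-concave: its squeezed rearrangement is log-concave. -/
def HashLogConcave (f : ℤ → ℝ) (hf : (Function.support f).Finite) : Prop :=
  ∀ i : ℤ, hashFn f hf (i - 1) * hashFn f hf (i + 1) ≤ (hashFn f hf i) ^ 2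

/-- Convolution of two functions on ℤ. -/
def conv (f g : ℤ → ℝ) : ℤ → ℝ := fun k => ∑' i, f i * g (k - i)


namespace CMH
open Finset Pointwise

variable (a b : ℤ → ℝ) (m n : ℤ)

lemma sum_Icc_split (f : ℤ → ℝ) {lo i j hi : ℤ} (h1 : lo ≤ i) (h2 : i ≤ j) (h3 : j ≤ hi) :
    ∑ r ∈ Finset.Icc lo hi, f r
      = (∑ r ∈ Finset.Icc lo (i - 1), f r) + (∑ r ∈ Finset.Icc i j, f r)
          + ∑ r ∈ Finset.Icc (j + 1) hi, f r := by
  have e1 : Finset.Icc lo hi = (Finset.Icc lo (i-1) ∪ Finset.Icc i j) ∪ Finset.Icc (j+1) hi := by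
    ext r; simp only [Finset.mem_union, Finset.mem_Icc]; omega
  have d1 : Disjoint (Finset.Icc lo (i-1)) (Finset.Icc i j) := by
    rw [Finset.disjoint_left]; intro r ha hb
    simp only [Finset.mem_Icc] at ha hb; omega
  have d2 : Disjoint (Finset.Icc lo (i-1) ∪ Finset.Icc i j) (Finset.Icc (j+1) hi) := by
    rw [Finset.disjoint_left]; intro r ha hb
    simp only [Finset.mem_union, Finset.mem_Icc] at ha hb; omega
  rw [e1, Finset.sum_union d2, Finset.sum_union d1]

def wr (t r : ℤ) : ℝ := a r * b (t - r)

def Lv (t : ℤ) : Finset ℤ := Finset.Icc (max 0 (t - n)) (min m t)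

lemma sum_le_sum_inj {ι : Type*} [DecidableEq ι] {s t : Finset ι} (e : ι → ι)
    (he : ∀ p ∈ s, e p ∈ t) (hinj : ∀ p ∈ s, ∀ q ∈ s, e p = e q → p = q)
    {f g : ι → ℝ} (hg : ∀ p ∈ t, 0 ≤ g p) (hfg : ∀ p ∈ s, f p ≤ g (e p)) :
    ∑ p ∈ s, f p ≤ ∑ p ∈ t, g p :=
  calc ∑ p ∈ s, f p ≤ ∑ p ∈ s, g (e p) := Finset.sum_le_sum hfg
    _ = ∑ p ∈ s.image e, g p := (Finset.sum_image hinj).symm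
    _ ≤ ∑ p ∈ t, g p := Finset.sum_le_sum_of_subset_of_nonneg
        (fun x hx => by
          obtain ⟨p, hp, rfl⟩ := Finset.mem_image.1 hx
          exact he p hp)
        (fun i hi _ => hg i hi)

variable (hm : 0 ≤ m) (hn : 0 ≤ n)
variable (ha : ∀ r, 0 ≤ a r) (hb : ∀ r, 0 ≤ b r)
variable (hapos : ∀ r, 0 ≤ r → r ≤ m → 0 < a r) (hbpos : ∀ r, 0 ≤ r → r ≤ n → 0 < b r)
variable (haR : ∀ p q, 0 ≤ p → p ≤ q → q + 1 ≤ m → a p * a (q + 1) ≤ a (p + 1) * a q)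
variable (hbR : ∀ p q, 0 ≤ p → p ≤ q → q + 1 ≤ n → b p * b (q + 1) ≤ b (p + 1) * b q)

include ha hb hbR in
/-- Claim 1: left part. -/
lemma claim1 (t i j : ℤ) (h1 : max 0 (t - n) ≤ i) (h2 : i ≤ j) (h3 : j ≤ min m t) :
    (∑ r ∈ Finset.Icc i j, wr a b t r) *
        (∑ r' ∈ Finset.Icc (max 0 (t + 1 - n)) (max i (t + 1 - n) - 1), wr a b (t+1) r')
      ≤ (∑ r ∈ Finset.Icc (max i (t + 1 - n)) (min (j + 1) m), wr a b (t+1) r) *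
          (∑ r' ∈ Finset.Icc (max 0 (t - n)) (i - 1), wr a b t r') := by
  rcases le_or_gt (t + 1 - n) i with hcase | hcase
  · -- unclipped: max i (t+1-n) = i
    rw [max_eq_left hcase]
    rw [Finset.sum_mul_sum, Finset.sum_mul_sum]
    rw [← Finset.sum_product', ← Finset.sum_product']
    apply sum_le_sum_inj (fun p => p)
    · intro p hp
      simp only [Finset.mem_product, Finset.mem_Icc] at *
      omega
    · intro p _ q _ h
      exact h
    · intro p _
      exact mul_nonneg (mul_nonneg (ha _) (hb _)) (mul_nonneg (ha _) (hb _))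
    · intro p hp
      simp only [Finset.mem_product, Finset.mem_Icc] at hp
      obtain ⟨⟨hr1, hr2⟩, hr3, hr4⟩ := hp
      show wr a b t p.1 * wr a b (t+1) p.2 ≤ wr a b (t+1) p.1 * wr a b t p.2
      have hB : b (t - p.1) * b ((t - p.2) + 1) ≤ b ((t - p.1) + 1) * b (t - p.2) := by
        apply hbR (t - p.1) (t - p.2) (by omega) (by omega) (by omega)
      have hA : (0:ℝ) ≤ a p.1 * a p.2 := mul_nonneg (ha _) (ha _)
      have := mul_le_mul_of_nonneg_left hB hA
      have e1 : t + 1 - p.1 = (t - p.1) + 1 := by ring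
      have e2 : t + 1 - p.2 = (t - p.2) + 1 := by ring
      simp only [wr, e1, e2]
      nlinarith [this]
  · -- clipped: i = t - n, left sums empty
    have hemp : Finset.Icc (max 0 (t + 1 - n)) (max i (t + 1 - n) - 1) = ∅ :=
      Finset.Icc_eq_empty (by omega)
    rw [hemp]
    simp only [Finset.sum_empty, mul_zero]
    apply mul_nonneg
    · exact Finset.sum_nonneg fun r _ => mul_nonneg (ha _) (hb _)
    · exact Finset.sum_nonneg fun r _ => mul_nonneg (ha _) (hb _)

include ha hb haR in
/-- Claim 2: right part. -/
lemma claim2 (t i j : ℤ) (h1 : max 0 (t - n) ≤ i) (h2 : i ≤ j) (h3 : j ≤ min m t) :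
    (∑ r ∈ Finset.Icc i j, wr a b t r) *
        (∑ r' ∈ Finset.Icc (min (j + 1) m + 1) (min m (t + 1)), wr a b (t+1) r')
      ≤ (∑ r ∈ Finset.Icc (max i (t + 1 - n)) (min (j + 1) m), wr a b (t+1) r) *
          (∑ r' ∈ Finset.Icc (j + 1) (min m t), wr a b t r') := by
  rcases le_or_gt (j + 1) m with hcase | hcase
  · -- j + 1 ≤ m, so min (j+1) m = j+1
    rw [min_eq_left hcase]
    rw [Finset.sum_mul_sum, Finset.sum_mul_sum]
    rw [← Finset.sum_product', ← Finset.sum_product']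
    apply sum_le_sum_inj (fun p => (p.1 + 1, p.2 - 1))
    · intro p hp
      simp only [Finset.mem_product, Finset.mem_Icc] at *
      omega
    · intro p _ q _ h
      have h1 := congrArg Prod.fst h
      have h2 := congrArg Prod.snd h
      simp only at h1 h2
      exact Prod.ext (by omega) (by omega)
    · intro p _
      exact mul_nonneg (mul_nonneg (ha _) (hb _)) (mul_nonneg (ha _) (hb _))
    · intro p hp
      simp only [Finset.mem_product, Finset.mem_Icc] at hp
      obtain ⟨⟨hr1, hr2⟩, hr3, hr4⟩ := hp
      show wr a b t p.1 * wr a b (t+1) p.2 ≤ wr a b (t+1) (p.1+1) * wr a b t (p.2-1)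
      have hA : a p.1 * a ((p.2 - 1) + 1) ≤ a (p.1 + 1) * a (p.2 - 1) :=
        haR p.1 (p.2 - 1) (by omega) (by omega) (by omega)
      have hB : (0:ℝ) ≤ b (t - p.1) * b (t + 1 - p.2) := mul_nonneg (hb _) (hb _)
      have e0 : (p.2 - 1) + 1 = p.2 := by ring
      rw [e0] at hA
      have := mul_le_mul_of_nonneg_left hA hB
      have e1 : t + 1 - (p.1 + 1) = t - p.1 := by ring
      have e2 : t - (p.2 - 1) = t + 1 - p.2 := by ring
      simp only [wr, e1, e2]
      nlinarith [this]
  · -- j = m : right sums empty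
    have hemp : Finset.Icc (min (j + 1) m + 1) (min m (t + 1)) = ∅ :=
      Finset.Icc_eq_empty (by omega)
    rw [hemp]
    simp only [Finset.sum_empty, mul_zero]
    apply mul_nonneg
    · exact Finset.sum_nonneg fun r _ => mul_nonneg (ha _) (hb _)
    · exact Finset.sum_nonneg fun r _ => mul_nonneg (ha _) (hb _)

include hm hn ha hb haR hbR in
/-- Normalized matching, interval case. -/
lemma NMI (t i j : ℤ) (ht1 : t + 1 ≤ m + n)
    (h1 : max 0 (t - n) ≤ i) (h2 : i ≤ j) (h3 : j ≤ min m t) :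
    (∑ r ∈ Finset.Icc i j, wr a b t r) * (∑ r ∈ Lv m n (t+1), wr a b (t+1) r)
      ≤ (∑ r ∈ Finset.Icc (max i (t + 1 - n)) (min (j + 1) m), wr a b (t+1) r) *
          (∑ r ∈ Lv m n t, wr a b t r) := by
  have hij' : max 0 (t + 1 - n) ≤ max i (t + 1 - n) ∧ max i (t + 1 - n) ≤ min (j + 1) m
      ∧ min (j + 1) m ≤ min m (t + 1) := by omega
  have split1 : ∑ r ∈ Lv m n t, wr a b t r
      = (∑ r ∈ Finset.Icc (max 0 (t-n)) (i - 1), wr a b t r) + (∑ r ∈ Finset.Icc i j, wr a b t r)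
          + ∑ r ∈ Finset.Icc (j + 1) (min m t), wr a b t r := by
    exact sum_Icc_split _ h1 h2 h3
  have split2 : ∑ r ∈ Lv m n (t+1), wr a b (t+1) r
      = (∑ r ∈ Finset.Icc (max 0 (t+1-n)) (max i (t + 1 - n) - 1), wr a b (t+1) r)
          + (∑ r ∈ Finset.Icc (max i (t + 1 - n)) (min (j + 1) m), wr a b (t+1) r)
          + ∑ r ∈ Finset.Icc (min (j + 1) m + 1) (min m (t+1)), wr a b (t+1) r := by
    exact sum_Icc_split _ hij'.1 hij'.2.1 hij'.2.2
  rw [split1, split2]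
  have c1 := claim1 a b m n ha hb hbR t i j h1 h2 h3
  have c2 := claim2 a b m n ha hb haR t i j h1 h2 h3
  nlinarith [c1, c2]

def crow' (t : ℤ) : ℝ := ∑ r ∈ Lv m n t, wr a b t r

def shR (t : ℤ) (R : Finset ℤ) : Finset ℤ := (R ∪ R.image (· + 1)) ∩ Lv m n (t + 1)

lemma shR_union (t : ℤ) (R1 R2 : Finset ℤ) :
    shR m n t (R1 ∪ R2) = shR m n t R1 ∪ shR m n t R2 := by
  simp only [shR, Finset.image_union]
  rw [Finset.union_inter_distrib_right, Finset.union_inter_distrib_right,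
    Finset.union_inter_distrib_right]
  ext x
  simp only [Finset.mem_union, Finset.mem_inter]
  tauto

lemma shR_Icc (t i j : ℤ) (h1 : max 0 (t - n) ≤ i) (h2 : i ≤ j) (h3 : j ≤ min m t) :
    shR m n t (Finset.Icc i j) = Finset.Icc (max i (t + 1 - n)) (min (j + 1) m) := by
  have himg : (Finset.Icc i j).image (· + 1) = Finset.Icc (i+1) (j+1) := by
    ext x
    simp only [Finset.mem_image, Finset.mem_Icc]
    constructor
    · rintro ⟨y, hy, rfl⟩; omega
    · intro hx; exact ⟨x - 1, by omega, by omega⟩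
  have huni : Finset.Icc i j ∪ Finset.Icc (i+1) (j+1) = Finset.Icc i (j+1) := by
    ext x; simp only [Finset.mem_union, Finset.mem_Icc]; omega
  rw [shR, himg, huni, Lv]
  ext x
  simp only [Finset.mem_inter, Finset.mem_Icc]
  omega

include hm hn ha hb haR hbR in
/-- Normalized matching, general case. -/
lemma NMgen (t : ℤ) (ht1 : t + 1 ≤ m + n) :
    ∀ (N : ℕ) (R : Finset ℤ), R.card = N → R ⊆ Lv m n t →
    (∑ r ∈ R, wr a b t r) * crow' a b m n (t+1)
      ≤ (∑ r ∈ shR m n t R, wr a b (t+1) r) * crow' a b m n t := by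
  intro N
  induction N using Nat.strong_induction_on with
  | _ N IH =>
    intro R hcard hsub
    rcases Finset.eq_empty_or_nonempty R with rfl | hR
    · simp only [Finset.sum_empty, zero_mul, shR, Finset.image_empty,
        Finset.empty_union, Finset.empty_inter]
      simp only [Finset.sum_empty, zero_mul, le_refl]
    · set j := R.max' hR with hj
      have hjR : j ∈ R := R.max'_mem hR
      set P := R.filter (fun i => i ≤ j ∧ Finset.Icc i j ⊆ R) with hP
      have hjP : j ∈ P := by
        simp only [hP, Finset.mem_filter]
        refine ⟨hjR, le_refl _, ?_⟩
        intro x hx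
        simp only [Finset.mem_Icc] at hx
        have : x = j := by omega
        rwa [this]
      have hPne : P.Nonempty := ⟨j, hjP⟩
      set i := P.min' hPne with hi
      have hiP : i ∈ P := P.min'_mem hPne
      simp only [hP, Finset.mem_filter] at hiP
      obtain ⟨hiR, hij, hIccR⟩ := hiP
      have him : i - 1 ∉ R := by
        intro hmem
        have : i - 1 ∈ P := by
          simp only [hP, Finset.mem_filter]
          refine ⟨hmem, by omega, ?_⟩
          intro x hx
          simp only [Finset.mem_Icc] at hx
          rcases eq_or_lt_of_le hx.1 with rfl | hlt
          · exact hmem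
          · exact hIccR (Finset.mem_Icc.2 ⟨by omega, hx.2⟩)
        have := P.min'_le _ this
        omega
      set R' := R \ Finset.Icc i j with hR'
      have hsmall : ∀ x ∈ R', x ≤ i - 2 := by
        intro x hx
        simp only [hR', Finset.mem_sdiff, Finset.mem_Icc] at hx
        have hxj : x ≤ j := R.le_max' x hx.1
        have : x ≠ i - 1 := fun h => him (h ▸ hx.1)
        omega
      have hunion : R = R' ∪ Finset.Icc i j := by
        ext x
        simp only [hR', Finset.mem_union, Finset.mem_sdiff]
        constructor
        · intro hx; by_cases h : x ∈ Finset.Icc i j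
          · exact Or.inr h
          · exact Or.inl ⟨hx, h⟩
        · rintro (⟨hx, _⟩ | hx)
          · exact hx
          · exact hIccR hx
      have hdisj : Disjoint R' (Finset.Icc i j) := Finset.sdiff_disjoint
      have hcard' : R'.card < N := by
        rw [← hcard]
        apply Finset.card_lt_card
        constructor
        · exact Finset.sdiff_subset
        · intro hsub2
          have := hsub2 hjR
          simp only [hR', Finset.mem_sdiff, Finset.mem_Icc] at this
          exact this.2 ⟨hij, le_refl _⟩
      have hiLv : max 0 (t - n) ≤ i ∧ j ≤ min m t := by
        have h1 := hsub hiR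
        have h2 := hsub hjR
        simp only [Lv, Finset.mem_Icc] at h1 h2
        exact ⟨h1.1, h2.2⟩
      -- shadow decomposition
      have hshd : shR m n t R = shR m n t R' ∪ Finset.Icc (max i (t + 1 - n)) (min (j+1) m) := by
        rw [hunion, shR_union, shR_Icc m n t i j hiLv.1 hij hiLv.2]
      have hshdisj : Disjoint (shR m n t R') (Finset.Icc (max i (t + 1 - n)) (min (j+1) m)) := by
        rw [Finset.disjoint_left]
        intro x hx hx2
        simp only [shR, Finset.mem_inter, Finset.mem_union, Finset.mem_image] at hx
        simp only [Finset.mem_Icc] at hx2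
        rcases hx.1 with h | ⟨y, hy, rfl⟩
        · have := hsmall x h; omega
        · have := hsmall y hy; omega
      have hIH := IH R'.card hcard' R' rfl (fun x hx => hsub (Finset.sdiff_subset hx))
      have hNMI := NMI a b m n hm hn ha hb haR hbR t i j ht1 hiLv.1 hij hiLv.2
      have e1 : ∑ r ∈ R, wr a b t r
          = (∑ r ∈ R', wr a b t r) + ∑ r ∈ Finset.Icc i j, wr a b t r := by
        rw [hunion, Finset.sum_union hdisj]
      have e2 : ∑ r ∈ shR m n t R, wr a b (t+1) r
          = (∑ r ∈ shR m n t R', wr a b (t+1) r)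
              + ∑ r ∈ Finset.Icc (max i (t + 1 - n)) (min (j+1) m), wr a b (t+1) r := by
        rw [hshd, Finset.sum_union hshdisj]
      rw [e1, e2, add_mul, add_mul]
      have hNMI' : (∑ r ∈ Finset.Icc i j, wr a b t r) * crow' a b m n (t+1)
          ≤ (∑ r ∈ Finset.Icc (max i (t + 1 - n)) (min (j+1) m), wr a b (t+1) r)
              * crow' a b m n t := hNMI
      linarith

def W (p : ℤ × ℤ) : ℝ := a p.1 * b p.2

def grd : Finset (ℤ × ℤ) := (Finset.Icc 0 m) ×ˢ (Finset.Icc 0 n)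

def shPt (U : Finset (ℤ × ℤ)) : Finset (ℤ × ℤ) :=
  (U.image (fun p => (p.1 + 1, p.2)) ∪ U.image (fun p => (p.1, p.2 + 1))).filter
    (fun p => p.1 ≤ m ∧ p.2 ≤ n)

section pt

variable {m n} (t : ℤ) (U : Finset (ℤ × ℤ))
  (hU : U ⊆ (grd m n).filter (fun p => p.1 + p.2 = t))

include hU

lemma memU : ∀ p ∈ U, 0 ≤ p.1 ∧ p.1 ≤ m ∧ 0 ≤ p.2 ∧ p.2 ≤ n ∧ p.1 + p.2 = t := by
  intro p hp
  have := hU hp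
  simp only [grd, Finset.mem_filter, Finset.mem_product, Finset.mem_Icc] at this
  exact ⟨this.1.1.1, this.1.1.2, this.1.2.1, this.1.2.2, this.2⟩

lemma memRU : ∀ r, r ∈ U.image Prod.fst ↔ (r, t - r) ∈ U := by
  intro r
  constructor
  · intro hr
    obtain ⟨p, hp, rfl⟩ := Finset.mem_image.1 hr
    have hlev := (memU t U hU p hp).2.2.2.2
    have : p = (p.1, t - p.1) := Prod.ext rfl (by omega)
    rwa [← this]
  · intro hr
    exact Finset.mem_image.2 ⟨(r, t - r), hr, rfl⟩

lemma RsubLv : U.image Prod.fst ⊆ Lv m n t := by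
  intro r hr
  obtain ⟨p, hp, rfl⟩ := Finset.mem_image.1 hr
  have h := memU t U hU p hp
  simp only [Lv, Finset.mem_Icc]
  omega

lemma sumU_eq : ∑ p ∈ U, W a b p = ∑ r ∈ U.image Prod.fst, wr a b t r := by
  rw [Finset.sum_image]
  · apply Finset.sum_congr rfl
    intro p hp
    have h := (memU t U hU p hp).2.2.2.2
    have e : t - p.1 = p.2 := by omega
    simp only [W, wr, e]
  · intro p hp q hq h
    have h1 := (memU t U hU p hp).2.2.2.2
    have h2 := (memU t U hU q hq).2.2.2.2
    exact Prod.ext h (by omega)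

lemma shPt_eq : shPt m n U = (shR m n t (U.image Prod.fst)).image (fun r => (r, t + 1 - r)) := by
  ext ⟨x, y⟩
  simp only [shPt, shR, Finset.mem_filter, Finset.mem_union, Finset.mem_image,
    Finset.mem_inter, Lv, Finset.mem_Icc, Prod.mk.injEq]
  constructor
  · rintro ⟨⟨p, hp, hp1, hp2⟩ | ⟨p, hp, hp1, hp2⟩, hxm, hyn⟩
    · have h := memU t U hU p hp
      exact ⟨p.1 + 1, ⟨Or.inr ⟨p.1, ⟨p, hp, rfl⟩, rfl⟩, by omega, by omega⟩, by omega, by omega⟩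
    · have h := memU t U hU p hp
      exact ⟨p.1, ⟨Or.inl ⟨p, hp, rfl⟩, by omega, by omega⟩, by omega, by omega⟩
  · rintro ⟨ρ, ⟨⟨p, hp, rfl⟩ | ⟨r, ⟨p, hp, rfl⟩, rfl⟩, hρ2⟩, rfl, rfl⟩
    · have h := memU t U hU p hp
      exact ⟨Or.inr ⟨p, hp, rfl, by omega⟩, by omega, by omega⟩
    · have h := memU t U hU p hp
      exact ⟨Or.inl ⟨p, hp, rfl, by omega⟩, by omega, by omega⟩

lemma sum_shPt_eq :
    ∑ p ∈ shPt m n U, W a b p = ∑ r ∈ shR m n t (U.image Prod.fst), wr a b (t+1) r := by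
  rw [shPt_eq t U hU, Finset.sum_image (by intro p _ q _ h; exact congrArg Prod.fst h)]
  apply Finset.sum_congr rfl
  intro r _
  simp only [W, wr]

end pt

include hm hn ha hb haR hbR in
/-- Normalized matching at the level of grid points. -/
lemma NMpt (t : ℤ) (ht1 : t + 1 ≤ m + n) (U : Finset (ℤ × ℤ))
    (hU : U ⊆ (grd m n).filter (fun p => p.1 + p.2 = t)) :
    (∑ p ∈ U, W a b p) * crow' a b m n (t+1)
      ≤ (∑ p ∈ shPt m n U, W a b p) * crow' a b m n t := by
  rw [sumU_eq a b t U hU, sum_shPt_eq a b t U hU]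
  exact NMgen a b m n hm hn ha hb haR hbR t ht1 _ _ rfl (RsubLv t U hU)

include ha hb in
lemma crow'_nonneg (t : ℤ) :
    0 ≤ crow' a b m n t :=
  Finset.sum_nonneg fun r _ => mul_nonneg (ha _) (hb _)

include hm hn ha hb hapos hbpos in
lemma crow'_pos (t : ℤ) (h0 : 0 ≤ t) (h1 : t ≤ m + n) : 0 < crow' a b m n t := by
  have hmem : max 0 (t - n) ∈ Lv m n t := by simp only [Lv, Finset.mem_Icc]; omega
  have hpos : 0 < wr a b t (max 0 (t - n)) :=
    mul_pos (hapos _ (by omega) (by omega)) (hbpos _ (by omega) (by omega))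
  have hle : ∑ r ∈ ({max 0 (t - n)} : Finset ℤ), wr a b t r ≤ ∑ r ∈ Lv m n t, wr a b t r :=
    Finset.sum_le_sum_of_subset_of_nonneg (Finset.singleton_subset_iff.2 hmem)
      (fun i _ _ => mul_nonneg (ha _) (hb _))
  simp only [Finset.sum_singleton] at hle
  exact lt_of_lt_of_le hpos hle

lemma knapsack (Λ : Finset ℤ) (c u : ℤ → ℝ) (k : ℕ)
    (hcnn : ∀ t, 0 ≤ c t)
    (hc : ∀ t ∈ Λ, 0 < c t) (hu0 : ∀ t ∈ Λ, 0 ≤ u t) (huc : ∀ t ∈ Λ, u t ≤ c t)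
    (hr : ∑ t ∈ Λ, u t / c t ≤ (k : ℝ)) :
    ∃ T : Finset ℤ, T.card = k ∧ ∑ t ∈ Λ, u t ≤ ∑ t ∈ T, c t := by
  rcases le_or_gt (k : ℕ) Λ.card with hk | hk
  · -- enough levels: pick the k levels with biggest c
    rcases Nat.eq_zero_or_pos k with rfl | hkpos
    · -- k = 0
      refine ⟨∅, rfl, ?_⟩
      simp only [Finset.sum_empty]
      have hz : ∀ t ∈ Λ, u t / c t = 0 := by
        apply (Finset.sum_eq_zero_iff_of_nonneg
          (fun t ht => div_nonneg (hu0 t ht) (hcnn t))).1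
        have h0 : (0:ℝ) ≤ ∑ t ∈ Λ, u t / c t :=
          Finset.sum_nonneg fun t ht => div_nonneg (hu0 t ht) (hcnn t)
        simpa using le_antisymm (by simpa using hr) h0
      apply le_of_eq
      apply Finset.sum_eq_zero
      intro t ht
      have := hz t ht
      have hcne : c t ≠ 0 := ne_of_gt (hc t ht)
      field_simp at this
      simpa using this
    · obtain ⟨T, hTS, hTmax⟩ := Finset.exists_max_image (Λ.powersetCard k)
        (fun T => ∑ t ∈ T, c t) (Finset.powersetCard_nonempty.2 hk)
      obtain ⟨hTsub, hTcard⟩ := Finset.mem_powersetCard.1 hTS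
      have hTne : T.Nonempty := Finset.card_pos.1 (hTcard ▸ hkpos)
      have hswap : ∀ t' ∈ Λ \ T, ∀ t ∈ T, c t' ≤ c t := by
        intro t' ht' t ht
        have ht'm := Finset.mem_sdiff.1 ht'
        have hT' : insert t' (T.erase t) ∈ Λ.powersetCard k := by
          apply Finset.mem_powersetCard.2
          constructor
          · intro x hx
            rcases Finset.mem_insert.1 hx with rfl | hx
            · exact ht'm.1
            · exact hTsub (Finset.mem_of_mem_erase hx)
          · rw [Finset.card_insert_of_notMem (fun h => ht'm.2 (Finset.mem_of_mem_erase h)),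
              Finset.card_erase_of_mem ht, hTcard]
            omega
        have := hTmax _ hT'
        rw [Finset.sum_insert (fun h => ht'm.2 (Finset.mem_of_mem_erase h))] at this
        have herase : ∑ x ∈ T.erase t, c x = ∑ x ∈ T, c x - c t := by
          rw [← Finset.sum_erase_add T c ht]; ring
        rw [herase] at this
        linarith
      obtain ⟨ts, htsT, htsmin⟩ := Finset.exists_min_image T c hTne
      have hctspos : 0 < c ts := hc ts (hTsub htsT)
      have hsplit : ∑ t ∈ Λ, u t = (∑ t ∈ Λ \ T, u t) + ∑ t ∈ T, u t :=
        (Finset.sum_sdiff hTsub).symm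
      have hsplit2 : ∑ t ∈ Λ, u t / c t = (∑ t ∈ Λ \ T, u t / c t) + ∑ t ∈ T, u t / c t :=
        (Finset.sum_sdiff hTsub).symm
      have h1 : ∑ t ∈ Λ \ T, u t ≤ (∑ t ∈ Λ \ T, u t / c t) * c ts := by
        rw [Finset.sum_mul]
        apply Finset.sum_le_sum
        intro t ht
        have htΛ := (Finset.mem_sdiff.1 ht).1
        have hct := hc t htΛ
        have e : u t = u t / c t * c t := by field_simp
        calc u t = u t / c t * c t := e
          _ ≤ u t / c t * c ts := mul_le_mul_of_nonneg_left (hswap t ht ts htsT)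
              (div_nonneg (hu0 t htΛ) (le_of_lt hct))
      have h2 : ∑ t ∈ Λ \ T, u t / c t ≤ (k : ℝ) - ∑ t ∈ T, u t / c t := by
        linarith [hr, hsplit2]
      have h3 : (∑ t ∈ Λ \ T, u t / c t) * c ts ≤ ((k : ℝ) - ∑ t ∈ T, u t / c t) * c ts :=
        mul_le_mul_of_nonneg_right h2 (le_of_lt hctspos)
      have h4 : ((k : ℝ) - ∑ t ∈ T, u t / c t) * c ts = ∑ t ∈ T, (1 - u t / c t) * c ts := by
        rw [eq_comm, ← Finset.sum_mul]
        congr 1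
        rw [Finset.sum_sub_distrib]
        simp only [Finset.sum_const, nsmul_eq_mul, mul_one, hTcard]
      have h5 : ∑ t ∈ T, (1 - u t / c t) * c ts ≤ ∑ t ∈ T, (c t - u t) := by
        apply Finset.sum_le_sum
        intro t ht
        have htΛ := hTsub ht
        have hct := hc t htΛ
        have hle1 : u t / c t ≤ 1 := (div_le_one hct).2 (huc t htΛ)
        have : (1 - u t / c t) * c ts ≤ (1 - u t / c t) * c t :=
          mul_le_mul_of_nonneg_left (htsmin t ht) (by linarith)
        refine le_trans this (le_of_eq ?_)
        field_simp
      have h6 : ∑ t ∈ T, (c t - u t) = ∑ t ∈ T, c t - ∑ t ∈ T, u t := Finset.sum_sub_distrib _ _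
      refine ⟨T, hTcard, ?_⟩
      calc ∑ t ∈ Λ, u t = (∑ t ∈ Λ \ T, u t) + ∑ t ∈ T, u t := hsplit
        _ ≤ (∑ t ∈ Λ \ T, u t / c t) * c ts + ∑ t ∈ T, u t := by linarith
        _ ≤ ∑ t ∈ T, c t := by linarith [h3, h4.le, h5, h6]
  · -- not enough levels: take all of Λ and pad
    have hMne : (insert 0 Λ).Nonempty := ⟨0, Finset.mem_insert_self _ _⟩
    set M := (insert 0 Λ).max' hMne with hM
    have hMge : ∀ t ∈ Λ, t ≤ M := fun t ht => Finset.le_max' _ t (Finset.mem_insert_of_mem ht)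
    set pad := Finset.Icc (M + 1) (M + (k - Λ.card : ℕ)) with hpad
    have hpadcard : pad.card = k - Λ.card := by
      rw [hpad, Int.card_Icc]
      omega
    have hdisj : Disjoint Λ pad := by
      rw [Finset.disjoint_left]
      intro t ht htp
      have h1 := hMge t ht
      have h2 := Finset.mem_Icc.1 htp
      omega
    refine ⟨Λ ∪ pad, ?_, ?_⟩
    · rw [Finset.card_union_of_disjoint hdisj, hpadcard]
      omega
    · rw [Finset.sum_union hdisj]
      have hpos : 0 ≤ ∑ t ∈ pad, c t := Finset.sum_nonneg fun t _ => hcnn t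
      have : ∑ t ∈ Λ, u t ≤ ∑ t ∈ Λ, c t := Finset.sum_le_sum huc
      linarith


/-- antichain (in the componentwise order) -/
def sAnti (A : Finset (ℤ × ℤ)) : Prop := ∀ p ∈ A, ∀ q ∈ A, p.1 ≤ q.1 → p.2 ≤ q.2 → p = q

include hm hn ha hb hapos hbpos haR hbR in
/-- weighted LYM via pushing antichains up level by level -/
lemma pushup : ∀ (N : ℕ) (A : Finset (ℤ × ℤ)), A ⊆ grd m n → sAnti A →
    (∀ p ∈ A, m + n - (N : ℤ) ≤ p.1 + p.2) →
    ∑ p ∈ A, W a b p / crow' a b m n (p.1 + p.2) ≤ 1 := by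
  intro N
  induction N with
  | zero =>
    intro A hA hanti hlev
    have hsub : A ⊆ {((m, n) : ℤ × ℤ)} := by
      intro p hp
      have h1 := hA hp
      simp only [grd, Finset.mem_product, Finset.mem_Icc] at h1
      have h2 := hlev p hp
      simp only [Finset.mem_singleton]
      have : p.1 = m ∧ p.2 = n := by
        constructor <;> omega
      exact Prod.ext this.1 this.2
    have hle : ∑ p ∈ A, W a b p / crow' a b m n (p.1 + p.2)
        ≤ ∑ p ∈ ({((m, n) : ℤ × ℤ)} : Finset (ℤ × ℤ)), W a b p / crow' a b m n (p.1 + p.2) :=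
      Finset.sum_le_sum_of_subset_of_nonneg hsub
        (fun p _ _ => div_nonneg (mul_nonneg (ha _) (hb _))
          (crow'_nonneg a b m n ha hb _))
    refine le_trans hle ?_
    rw [Finset.sum_singleton]
    have hLv : Lv m n (m + n) = {m} := by
      rw [Lv]
      have : max 0 (m + n - n) = m := by omega
      have h2 : min m (m + n) = m := by omega
      rw [this, h2, Finset.Icc_self]
    have hcrow : crow' a b m n (m + n) = W a b (m, n) := by
      rw [crow', hLv, Finset.sum_singleton, wr, W]
      congr 2
      omega
    rw [hcrow]
    exact div_self_le_one _
  | succ N IH =>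
    intro A hA hanti hlev
    set t₀ : ℤ := m + n - (N + 1 : ℕ) with ht₀
    have ht₀' : t₀ = m + n - (N : ℤ) - 1 := by rw [ht₀]; push_cast; ring
    set U := A.filter (fun p => p.1 + p.2 = t₀) with hUdef
    rcases Finset.eq_empty_or_nonempty U with hUe | hUne
    · apply IH A hA hanti
      intro p hp
      have h1 := hlev p hp
      have h2 : p.1 + p.2 ≠ t₀ := by
        intro h
        have : p ∈ U := Finset.mem_filter.2 ⟨hp, h⟩
        rw [hUe] at this
        exact absurd this (Finset.notMem_empty p)
      rw [ht₀'] at h2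
      omega
    · obtain ⟨p₀, hp₀⟩ := hUne
      have hp₀' := Finset.mem_filter.1 hp₀
      have hp₀g := hA hp₀'.1
      simp only [grd, Finset.mem_product, Finset.mem_Icc] at hp₀g
      have ht0pos : 0 ≤ t₀ := by
        have := hp₀'.2
        omega
      have ht0top : t₀ + 1 ≤ m + n := by
        rw [ht₀']
        have : (0:ℤ) ≤ (N : ℤ) := Int.natCast_nonneg N
        omega
      have hUsub : U ⊆ (grd m n).filter (fun p => p.1 + p.2 = t₀) := by
        intro p hp
        have h := Finset.mem_filter.1 hp
        exact Finset.mem_filter.2 ⟨hA h.1, h.2⟩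
      -- shadow facts
      have hshmem : ∀ q ∈ shPt m n U, (q ∈ grd m n ∧ q.1 + q.2 = t₀ + 1 ∧
          ∃ p ∈ U, p.1 ≤ q.1 ∧ p.2 ≤ q.2 ∧ p ≠ q) := by
        intro q hq
        simp only [shPt, Finset.mem_filter, Finset.mem_union, Finset.mem_image] at hq
        obtain ⟨h1 | h1, hq1, hq2⟩ := hq
        · obtain ⟨p, hp, rfl⟩ := h1
          have h := memU t₀ U hUsub p hp
          refine ⟨?_, by simp only; omega, p, hp, by simp only; omega, by simp only; omega, ?_⟩
          · simp only [grd, Finset.mem_product, Finset.mem_Icc]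
            constructor <;> constructor <;> omega
          · intro h2
            have := congrArg Prod.fst h2
            simp only at this
            omega
        · obtain ⟨p, hp, rfl⟩ := h1
          have h := memU t₀ U hUsub p hp
          refine ⟨?_, by simp only; omega, p, hp, by simp only; omega, by simp only; omega, ?_⟩
          · simp only [grd, Finset.mem_product, Finset.mem_Icc]
            constructor <;> constructor <;> omega
          · intro h2
            have := congrArg Prod.snd h2
            simp only at this
            omega
      have hlevAU : ∀ p ∈ A \ U, t₀ + 1 ≤ p.1 + p.2 := by
        intro p hp
        have h := Finset.mem_sdiff.1 hp
        have h1 := hlev p h.1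
        have h2 : p.1 + p.2 ≠ t₀ := by
          intro hh
          exact h.2 (Finset.mem_filter.2 ⟨h.1, hh⟩)
        rw [ht₀'] at h2 ⊢
        omega
      have hdisj : Disjoint (A \ U) (shPt m n U) := by
        rw [Finset.disjoint_left]
        intro q hq hq2
        obtain ⟨_, _, p, hpU, hle1, hle2, hne⟩ := hshmem q hq2
        have hpA := (Finset.mem_filter.1 hpU).1
        have hqA := (Finset.mem_sdiff.1 hq).1
        exact hne (hanti p hpA q hqA hle1 hle2)
      set A' := (A \ U) ∪ shPt m n U with hA'def
      have hA'g : A' ⊆ grd m n := by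
        intro p hp
        rcases Finset.mem_union.1 hp with h | h
        · exact hA (Finset.mem_sdiff.1 h).1
        · exact (hshmem p h).1
      have hanti' : sAnti A' := by
        intro p hp q hq hle1 hle2
        rcases Finset.mem_union.1 hp with hp' | hp' <;> rcases Finset.mem_union.1 hq with hq' | hq'
        · exact hanti p (Finset.mem_sdiff.1 hp').1 q (Finset.mem_sdiff.1 hq').1 hle1 hle2
        · -- p ∈ A \ U, q ∈ shadow
          have h1 := hlevAU p hp'
          have h2 := (hshmem q hq').2.1
          have : p.1 = q.1 ∧ p.2 = q.2 := by constructor <;> omega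
          exact Prod.ext this.1 this.2
        · -- p ∈ shadow, q ∈ A \ U
          obtain ⟨_, hplev, p', hp'U, hle1', hle2', hne⟩ := hshmem p hp'
          have hp'A := (Finset.mem_filter.1 hp'U).1
          have hqA := (Finset.mem_sdiff.1 hq').1
          have heq := hanti p' hp'A q hqA (le_trans hle1' hle1) (le_trans hle2' hle2)
          have e1 : p'.1 = q.1 := congrArg Prod.fst heq
          have e2 : p'.2 = q.2 := congrArg Prod.snd heq
          have : p.1 = q.1 ∧ p.2 = q.2 := by constructor <;> omega
          exact Prod.ext this.1 this.2
        · -- both in shadow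
          have h1 := (hshmem p hp').2.1
          have h2 := (hshmem q hq').2.1
          have : p.1 = q.1 ∧ p.2 = q.2 := by constructor <;> omega
          exact Prod.ext this.1 this.2
      have hlev' : ∀ p ∈ A', m + n - (N : ℤ) ≤ p.1 + p.2 := by
        intro p hp
        rcases Finset.mem_union.1 hp with h | h
        · have := hlevAU p h
          rw [ht₀'] at this
          omega
        · have := (hshmem p h).2.1
          rw [ht₀'] at this
          omega
      have hIH := IH A' hA'g hanti' hlev'
      rw [hA'def, Finset.sum_union hdisj] at hIH
      -- key inequality on the bottom level
      have hcpos0 := crow'_pos a b m n hm hn ha hb hapos hbpos t₀ ht0pos (by omega)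
      have hcpos1 := crow'_pos a b m n hm hn ha hb hapos hbpos (t₀+1) (by omega) ht0top
      have hNM := NMpt a b m n hm hn ha hb haR hbR t₀ ht0top U hUsub
      have hUterm : ∑ p ∈ U, W a b p / crow' a b m n (p.1 + p.2)
          ≤ ∑ q ∈ shPt m n U, W a b q / crow' a b m n (q.1 + q.2) := by
        have e1 : ∑ p ∈ U, W a b p / crow' a b m n (p.1 + p.2)
            = (∑ p ∈ U, W a b p) / crow' a b m n t₀ := by
          rw [Finset.sum_div]
          apply Finset.sum_congr rfl
          intro p hp
          rw [(Finset.mem_filter.1 hp).2]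
        have e2 : ∑ q ∈ shPt m n U, W a b q / crow' a b m n (q.1 + q.2)
            = (∑ q ∈ shPt m n U, W a b q) / crow' a b m n (t₀ + 1) := by
          rw [Finset.sum_div]
          apply Finset.sum_congr rfl
          intro q hq
          rw [(hshmem q hq).2.1]
        rw [e1, e2, div_le_div_iff₀ hcpos0 hcpos1]
        exact hNM
      have hsplit : ∑ p ∈ A, W a b p / crow' a b m n (p.1 + p.2)
          = (∑ p ∈ A \ U, W a b p / crow' a b m n (p.1 + p.2))
              + ∑ p ∈ U, W a b p / crow' a b m n (p.1 + p.2) := by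
        rw [Finset.sum_sdiff (Finset.filter_subset _ _)]
      rw [hsplit]
      linarith

lemma cf_eq (t : ℤ) :
    ∑ p ∈ (grd m n).filter (fun p => p.1 + p.2 = t), W a b p = crow' a b m n t := by
  rw [sumU_eq a b t _ (le_refl _)]
  congr 1
  apply Finset.Subset.antisymm (RsubLv t _ (le_refl _))
  intro r hr
  simp only [Lv, Finset.mem_Icc] at hr
  apply Finset.mem_image.2
  refine ⟨(r, t - r), ?_, rfl⟩
  simp only [grd, Finset.mem_filter, Finset.mem_product, Finset.mem_Icc]
  refine ⟨⟨⟨by omega, by omega⟩, by omega, by omega⟩, by omega⟩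

include hm hn ha hb hapos hbpos haR hbR in
lemma core_majorize (x y : ℤ → ℤ)
    (hx : ∀ p q, 0 ≤ p → p < q → q ≤ m → x p < x q)
    (hy : ∀ p q, 0 ≤ p → p < q → q ≤ n → y p < y q)
    (s : Finset ℤ) :
    ∃ T : Finset ℤ, T.card = s.card ∧
      ∑ p ∈ (grd m n).filter (fun p => x p.1 + y p.2 ∈ s), W a b p
        ≤ ∑ t ∈ T, crow' a b m n t := by
  classical
  set P := (grd m n).filter (fun p => x p.1 + y p.2 ∈ s) with hP
  have hPg : P ⊆ grd m n := Finset.filter_subset _ _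
  have hgrd_mem : ∀ p ∈ grd m n, 0 ≤ p.1 ∧ p.1 ≤ m ∧ 0 ≤ p.2 ∧ p.2 ≤ n := by
    intro p hp
    simp only [grd, Finset.mem_product, Finset.mem_Icc] at hp
    exact ⟨hp.1.1, hp.1.2, hp.2.1, hp.2.2⟩
  have hxmono : ∀ p q, 0 ≤ p → p ≤ q → q ≤ m → x p ≤ x q := by
    intro p q h1 h2 h3
    rcases eq_or_lt_of_le h2 with rfl | h
    · exact le_refl _
    · exact le_of_lt (hx p q h1 h h3)
  have hymono : ∀ p q, 0 ≤ p → p ≤ q → q ≤ n → y p ≤ y q := by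
    intro p q h1 h2 h3
    rcases eq_or_lt_of_le h2 with rfl | h
    · exact le_refl _
    · exact le_of_lt (hy p q h1 h h3)
  have hanti : ∀ z : ℤ, sAnti (P.filter (fun p => x p.1 + y p.2 = z)) := by
    intro z p hp q hq h1 h2
    have hpz := Finset.mem_filter.1 hp
    have hqz := Finset.mem_filter.1 hq
    have hpg := hgrd_mem p (hPg hpz.1)
    have hqg := hgrd_mem q (hPg hqz.1)
    by_contra hne
    have hlt : x p.1 + y p.2 < x q.1 + y q.2 := by
      rcases eq_or_lt_of_le h1 with he1 | hl1
      · have h2' : p.2 < q.2 := by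
          rcases eq_or_lt_of_le h2 with he2 | hl2
          · exact absurd (Prod.ext he1 he2) hne
          · exact hl2
        have := hy p.2 q.2 (by omega) h2' (by omega)
        have := hxmono p.1 q.1 (by omega) h1 (by omega)
        omega
      · have hxlt := hx p.1 q.1 (by omega) hl1 (by omega)
        have := hymono p.2 q.2 (by omega) h2 (by omega)
        omega
    rw [hpz.2, hqz.2] at hlt
    exact absurd hlt (lt_irrefl z)
  have hLYM : ∀ z : ℤ, ∑ p ∈ P.filter (fun p => x p.1 + y p.2 = z),
      W a b p / crow' a b m n (p.1 + p.2) ≤ 1 := by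
    intro z
    apply pushup a b m n hm hn ha hb hapos hbpos haR hbR (m + n).toNat
    · exact fun p hp => hPg (Finset.mem_filter.1 hp).1
    · exact hanti z
    · intro p hp
      have := hgrd_mem p (hPg (Finset.mem_filter.1 hp).1)
      omega
  have htot : ∑ p ∈ P, W a b p / crow' a b m n (p.1 + p.2) ≤ (s.card : ℝ) := by
    rw [← Finset.sum_fiberwise_of_maps_to (g := fun p => x p.1 + y p.2) (t := s)
      (fun p hp => (Finset.mem_filter.1 hp).2) (fun p => W a b p / crow' a b m n (p.1 + p.2))]
    calc ∑ z ∈ s, ∑ p ∈ P.filter (fun p => x p.1 + y p.2 = z),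
          W a b p / crow' a b m n (p.1 + p.2) ≤ ∑ z ∈ s, (1:ℝ) :=
        Finset.sum_le_sum (fun z _ => hLYM z)
      _ = (s.card : ℝ) := by simp
  set Λ := Finset.Icc (0:ℤ) (m + n) with hΛ
  set u : ℤ → ℝ := fun t => ∑ p ∈ P.filter (fun p => p.1 + p.2 = t), W a b p with hu
  have hmaps : ∀ p ∈ P, p.1 + p.2 ∈ Λ := by
    intro p hp
    have := hgrd_mem p (hPg hp)
    simp only [hΛ, Finset.mem_Icc]
    omega
  have husum : ∑ t ∈ Λ, u t = ∑ p ∈ P, W a b p :=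
    Finset.sum_fiberwise_of_maps_to hmaps _
  have hratio : ∑ t ∈ Λ, u t / crow' a b m n t ≤ (s.card : ℝ) := by
    have e : ∀ t ∈ Λ, u t / crow' a b m n t
        = ∑ p ∈ P.filter (fun p => p.1 + p.2 = t), W a b p / crow' a b m n (p.1 + p.2) := by
      intro t _
      rw [hu]
      simp only
      rw [Finset.sum_div]
      apply Finset.sum_congr rfl
      intro p hp
      rw [(Finset.mem_filter.1 hp).2]
    rw [Finset.sum_congr rfl e, Finset.sum_fiberwise_of_maps_to hmaps]
    exact htot
  have huc : ∀ t ∈ Λ, u t ≤ crow' a b m n t := by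
    intro t _
    rw [← cf_eq a b m n t]
    apply Finset.sum_le_sum_of_subset_of_nonneg
    · intro p hp
      have h := Finset.mem_filter.1 hp
      exact Finset.mem_filter.2 ⟨hPg h.1, h.2⟩
    · intro p _ _
      exact mul_nonneg (ha _) (hb _)
  obtain ⟨T, hTcard, hTle⟩ := knapsack Λ (crow' a b m n) u s.card
    (crow'_nonneg a b m n ha hb)
    (fun t ht => by
      have := Finset.mem_Icc.1 ht
      exact crow'_pos a b m n hm hn ha hb hapos hbpos t this.1 this.2)
    (fun t _ => Finset.sum_nonneg fun p _ => mul_nonneg (ha _) (hb _))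
    huc hratio
  exact ⟨T, hTcard, by rw [← husum] at *; exact hTle⟩



variable (f : ℤ → ℝ) (hf : (Function.support f).Finite)

/-- number of support points minus 1 -/
def mH : ℤ := (hf.toFinset.card : ℤ) - 1

/-- the increasing enumeration of the support -/
def XH : ℤ → ℤ := fun r => (hf.toFinset.sort (· ≤ ·)).getD r.toNat 0

lemma length_sort' : (hf.toFinset.sort (· ≤ ·)).length = hf.toFinset.card :=
  Finset.length_sort _

lemma hash_eq_f {r : ℤ} (h0 : 0 ≤ r) (h1 : r ≤ mH f hf) :
    hashFn f hf r = f (XH f hf r) := by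
  have hlt : r.toNat < hf.toFinset.card := by
    simp only [mH] at h1
    omega
  rw [hashFn, dif_pos ⟨h0, hlt⟩, XH]
  congr 1
  rw [List.getD_eq_getElem?_getD, List.getElem?_eq_getElem (by rw [length_sort']; exact hlt)]
  simp [List.get_eq_getElem]

lemma hash_zero {r : ℤ} (h : ¬(0 ≤ r ∧ r ≤ mH f hf)) : hashFn f hf r = 0 := by
  rw [hashFn, dif_neg]
  intro ⟨hc1, hc2⟩
  simp only [mH] at h
  omega

lemma XH_mem_support {r : ℤ} (h0 : 0 ≤ r) (h1 : r ≤ mH f hf) :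
    XH f hf r ∈ Function.support f := by
  have hlt : r.toNat < (hf.toFinset.sort (· ≤ ·)).length := by
    rw [length_sort']; simp only [mH] at h1; omega
  have hmem : (hf.toFinset.sort (· ≤ ·)).get ⟨r.toNat, hlt⟩ ∈ hf.toFinset.sort (· ≤ ·) :=
    List.get_mem _ ⟨r.toNat, hlt⟩
  rw [Finset.mem_sort] at hmem
  have : XH f hf r = (hf.toFinset.sort (· ≤ ·)).get ⟨r.toNat, hlt⟩ := by
    rw [XH, List.getD_eq_getElem?_getD, List.getElem?_eq_getElem hlt]
    simp [List.get_eq_getElem]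
  rw [this]
  exact (Set.Finite.mem_toFinset hf).1 hmem

lemma hash_nonneg (hf0 : ∀ i, 0 ≤ f i) (r : ℤ) : 0 ≤ hashFn f hf r := by
  by_cases h : 0 ≤ r ∧ r ≤ mH f hf
  · rw [hash_eq_f f hf h.1 h.2]; exact hf0 _
  · rw [hash_zero f hf h]

lemma hash_pos (hf0 : ∀ i, 0 ≤ f i) {r : ℤ} (h0 : 0 ≤ r) (h1 : r ≤ mH f hf) :
    0 < hashFn f hf r := by
  rw [hash_eq_f f hf h0 h1]
  have := XH_mem_support f hf h0 h1
  rw [Function.mem_support] at this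
  exact lt_of_le_of_ne (hf0 _) (Ne.symm this)

lemma XH_strict {p q : ℤ} (h0 : 0 ≤ p) (h1 : p < q) (h2 : q ≤ mH f hf) :
    XH f hf p < XH f hf q := by
  have hltq : q.toNat < (hf.toFinset.sort (· ≤ ·)).length := by
    rw [length_sort']; simp only [mH] at h2; omega
  have hltp : p.toNat < (hf.toFinset.sort (· ≤ ·)).length := by omega
  have hsorted := Finset.sortedLT_sort hf.toFinset
  have hmono := List.SortedLT.strictMono_get hsorted
    (a := ⟨p.toNat, hltp⟩) (b := ⟨q.toNat, hltq⟩) (by simp [Fin.lt_def]; omega)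
  have ep : XH f hf p = (hf.toFinset.sort (· ≤ ·)).get ⟨p.toNat, hltp⟩ := by
    rw [XH, List.getD_eq_getElem?_getD, List.getElem?_eq_getElem hltp]
    simp [List.get_eq_getElem]
  have eq' : XH f hf q = (hf.toFinset.sort (· ≤ ·)).get ⟨q.toNat, hltq⟩ := by
    rw [XH, List.getD_eq_getElem?_getD, List.getElem?_eq_getElem hltq]
    simp [List.get_eq_getElem]
  rw [ep, eq']
  exact hmono

lemma sum_XH (F : ℤ → ℝ) :
    ∑ r ∈ Finset.Icc 0 (mH f hf), F (XH f hf r) = ∑ v ∈ hf.toFinset, F v := by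
  apply Finset.sum_bij (i := fun r _ => XH f hf r)
  · intro r hr
    have h := Finset.mem_Icc.1 hr
    have := XH_mem_support f hf h.1 h.2
    exact (Set.Finite.mem_toFinset hf).2 this
  · intro p hp q hq h
    have hpm := Finset.mem_Icc.1 hp
    have hqm := Finset.mem_Icc.1 hq
    by_contra hne
    rcases lt_or_gt_of_ne hne with hlt | hlt
    · exact absurd h (ne_of_lt (XH_strict f hf hpm.1 hlt hqm.2))
    · exact absurd h.symm (ne_of_lt (XH_strict f hf hqm.1 hlt hpm.2))
  · intro v hv
    have hvl : v ∈ hf.toFinset.sort (· ≤ ·) := (Finset.mem_sort _).2 hv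
    obtain ⟨⟨i, hilt⟩, hi⟩ := List.mem_iff_get.1 hvl
    refine ⟨(i : ℤ), Finset.mem_Icc.2 ⟨by omega, ?_⟩, ?_⟩
    · rw [length_sort'] at hilt
      simp only [mH]
      omega
    · rw [XH, Int.toNat_natCast, List.getD_eq_getElem?_getD, List.getElem?_eq_getElem hilt]
      simp only [List.get_eq_getElem] at hi
      simp [hi]
  · intro r hr
    rfl

lemma XH_surj {v : ℤ} (hv : v ∈ hf.toFinset) :
    ∃ r : ℤ, 0 ≤ r ∧ r ≤ mH f hf ∧ XH f hf r = v := by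
  have hvl : v ∈ hf.toFinset.sort (· ≤ ·) := (Finset.mem_sort _).2 hv
  obtain ⟨⟨i, hilt⟩, hi⟩ := List.mem_iff_get.1 hvl
  refine ⟨(i : ℤ), by omega, ?_, ?_⟩
  · rw [length_sort'] at hilt
    simp only [mH]
    omega
  · rw [XH, Int.toNat_natCast, List.getD_eq_getElem?_getD, List.getElem?_eq_getElem hilt]
    simp only [List.get_eq_getElem] at hi
    simp [hi]

lemma XH_inj {p q : ℤ} (h0 : 0 ≤ p) (h0' : 0 ≤ q) (h1 : p ≤ mH f hf) (h1' : q ≤ mH f hf)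
    (h : XH f hf p = XH f hf q) : p = q := by
  by_contra hne
  rcases lt_or_gt_of_ne hne with hlt | hlt
  · exact absurd h (ne_of_lt (XH_strict f hf h0 hlt h1'))
  · exact absurd h.symm (ne_of_lt (XH_strict f hf h0' hlt h1))

lemma f_apply_eq (w : ℤ) :
    f w = ∑ s ∈ (Finset.Icc 0 (mH f hf)).filter (fun s => XH f hf s = w), hashFn f hf s := by
  by_cases hw : w ∈ Function.support f
  · obtain ⟨r₀, hr0, hr1, hr2⟩ := XH_surj f hf ((Set.Finite.mem_toFinset hf).2 hw)
    have hfil : (Finset.Icc 0 (mH f hf)).filter (fun s => XH f hf s = w) = {r₀} := by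
      ext s
      simp only [Finset.mem_filter, Finset.mem_Icc, Finset.mem_singleton]
      constructor
      · rintro ⟨⟨hs0, hs1⟩, hs2⟩
        exact XH_inj f hf hs0 hr0 hs1 hr1 (by rw [hs2, hr2])
      · rintro rfl
        exact ⟨⟨hr0, hr1⟩, hr2⟩
    rw [hfil, Finset.sum_singleton, hash_eq_f f hf hr0 hr1, hr2]
  · have hw0 : f w = 0 := by
      by_contra h
      exact hw (Function.mem_support.2 h)
    have hfil : (Finset.Icc 0 (mH f hf)).filter (fun s => XH f hf s = w) = ∅ := by
      ext s
      simp only [Finset.mem_filter, Finset.mem_Icc, Finset.notMem_empty, iff_false, not_and]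
      rintro ⟨hs0, hs1⟩ hs2
      exact hw (hs2 ▸ XH_mem_support f hf hs0 hs1)
    rw [hfil, Finset.sum_empty, hw0]

lemma sum_hash : ∑ r ∈ Finset.Icc 0 (mH f hf), hashFn f hf r = ∑ v ∈ hf.toFinset, f v := by
  rw [← sum_XH f hf f]
  apply Finset.sum_congr rfl
  intro r hr
  have h := Finset.mem_Icc.1 hr
  exact hash_eq_f f hf h.1 h.2

lemma support_card_pos (hsum : ∑' i, f i = 1) : 0 ≤ mH f hf := by
  simp only [mH]
  by_contra h
  have hcard : hf.toFinset.card = 0 := by omega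
  have hemp : hf.toFinset = ∅ := Finset.card_eq_zero.1 hcard
  have hzero : ∀ i, f i = 0 := by
    intro i
    by_contra hne
    have : i ∈ hf.toFinset := (Set.Finite.mem_toFinset hf).2 (Function.mem_support.2 hne)
    rw [hemp] at this
    exact absurd this (Finset.notMem_empty i)
  have : (∑' i, f i) = 0 := by
    have : f = fun _ => 0 := funext hzero
    rw [this]
    exact tsum_zero
  rw [hsum] at this
  exact one_ne_zero this

lemma hash_ratio (hf0 : ∀ i, 0 ≤ f i) (hlc : HashLogConcave f hf) :
    ∀ p q : ℤ, 0 ≤ p → p ≤ q → q + 1 ≤ mH f hf →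
      hashFn f hf p * hashFn f hf (q + 1) ≤ hashFn f hf (p + 1) * hashFn f hf q := by
  have key : ∀ k : ℕ, ∀ p : ℤ, 0 ≤ p → p + k + 1 ≤ mH f hf →
      hashFn f hf p * hashFn f hf (p + k + 1) ≤ hashFn f hf (p + 1) * hashFn f hf (p + k) := by
    intro k
    induction k with
    | zero =>
      intro p h0 h1
      push_cast
      simp only [add_zero]
      exact le_of_eq (mul_comm _ _)
    | succ k IH =>
      intro p h0 h1
      push_cast at h1 ⊢
      have hIH := IH p h0 (by omega)
      have hLC := hlc (p + k + 1)
      have e3 : p + (k:ℤ) + 1 - 1 = p + k := by ring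
      rw [e3] at hLC
      have hpk : 0 < hashFn f hf (p + k) := hash_pos f hf hf0 (by omega) (by omega)
      have hpk1 : 0 ≤ hashFn f hf (p + k + 1) := hash_nonneg f hf hf0 _
      have hp0 : 0 ≤ hashFn f hf p := hash_nonneg f hf hf0 _
      have s1 := mul_le_mul_of_nonneg_left hLC hp0
      have s2 := mul_le_mul_of_nonneg_right hIH hpk1
      have e4 : p + (k:ℤ) + 1 + 1 = p + (k + 1) + 1 := by ring
      have e5 : p + ((k:ℤ) + 1) = p + k + 1 := by ring
      rw [e5]
      refine le_of_mul_le_mul_left ?_ hpk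
      rw [e4] at s1
      nlinarith [s1, s2]
  intro p q h0 h1 h2
  have hk := key (q - p).toNat p h0 (by omega)
  have e : p + ((q - p).toNat : ℤ) = q := by omega
  rw [e] at hk
  exact hk

section two

variable (f₁ f₂ : ℤ → ℝ) (h₁ : (Function.support f₁).Finite) (h₂ : (Function.support f₂).Finite)

lemma conv_eq_sum (z : ℤ) :
    conv f₁ f₂ z
      = ∑ p ∈ ((Finset.Icc 0 (mH f₁ h₁)) ×ˢ (Finset.Icc 0 (mH f₂ h₂))).filter
          (fun p => XH f₁ h₁ p.1 + XH f₂ h₂ p.2 = z),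
        hashFn f₁ h₁ p.1 * hashFn f₂ h₂ p.2 := by
  have step1 : conv f₁ f₂ z = ∑ i ∈ h₁.toFinset, f₁ i * f₂ (z - i) :=
    tsum_eq_sum (fun i hi => by
      have : f₁ i = 0 := by
        by_contra h
        exact hi ((Set.Finite.mem_toFinset h₁).2 (Function.mem_support.2 h))
      rw [this, zero_mul])
  rw [step1, ← sum_XH f₁ h₁ (fun v => f₁ v * f₂ (z - v))]
  have step2 : ∀ r ∈ Finset.Icc 0 (mH f₁ h₁),
      f₁ (XH f₁ h₁ r) * f₂ (z - XH f₁ h₁ r)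
        = ∑ s ∈ (Finset.Icc 0 (mH f₂ h₂)).filter
            (fun s => XH f₁ h₁ r + XH f₂ h₂ s = z),
          hashFn f₁ h₁ r * hashFn f₂ h₂ s := by
    intro r hr
    have hrm := Finset.mem_Icc.1 hr
    rw [← hash_eq_f f₁ h₁ hrm.1 hrm.2, f_apply_eq f₂ h₂ (z - XH f₁ h₁ r), Finset.mul_sum]
    have hfil : (Finset.Icc 0 (mH f₂ h₂)).filter (fun s => XH f₂ h₂ s = z - XH f₁ h₁ r)
        = (Finset.Icc 0 (mH f₂ h₂)).filter (fun s => XH f₁ h₁ r + XH f₂ h₂ s = z) := by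
      ext s
      simp only [Finset.mem_filter, Finset.mem_Icc]
      omega
    rw [hfil]
  rw [Finset.sum_congr rfl step2, eq_comm, Finset.sum_filter, Finset.sum_product]
  apply Finset.sum_congr rfl
  intro r _
  rw [Finset.sum_filter]

lemma conv_hash_eq_sum (t : ℤ) :
    conv (hashFn f₁ h₁) (hashFn f₂ h₂) t
      = ∑ i ∈ Finset.Icc 0 (mH f₁ h₁), hashFn f₁ h₁ i * hashFn f₂ h₂ (t - i) :=
  tsum_eq_sum (fun i hi => by
    have : hashFn f₁ h₁ i = 0 := hash_zero f₁ h₁ (by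
      intro hc
      exact hi (Finset.mem_Icc.2 ⟨hc.1, hc.2⟩))
    rw [this, zero_mul])

lemma tsum_conv_eq (F G : Finset ℤ) (hfF : ∀ i, i ∉ F → f₁ i = 0) (hgG : ∀ j, j ∉ G → f₂ j = 0) :
    ∑' k, conv f₁ f₂ k = (∑ i ∈ F, f₁ i) * (∑ j ∈ G, f₂ j) := by
  have step1 : ∀ k, conv f₁ f₂ k = ∑ i ∈ F, f₁ i * f₂ (k - i) := fun k =>
    tsum_eq_sum (fun i hi => by rw [hfF i hi, zero_mul])
  have step2 : ∀ k, k ∉ F + G → conv f₁ f₂ k = 0 := by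
    intro k hk
    rw [step1]
    apply Finset.sum_eq_zero
    intro i hi
    have : f₂ (k - i) = 0 := by
      apply hgG
      intro hmem
      have e : i + (k - i) = k := by ring
      exact hk (e ▸ Finset.add_mem_add hi hmem)
    rw [this, mul_zero]
  rw [tsum_eq_sum step2]
  have step3 : ∑ k ∈ F + G, conv f₁ f₂ k = ∑ i ∈ F, f₁ i * ∑ k ∈ F + G, f₂ (k - i) := by
    rw [Finset.sum_congr rfl (fun k _ => step1 k), Finset.sum_comm]
    apply Finset.sum_congr rfl
    intro i _
    rw [Finset.mul_sum]
  rw [step3, Finset.sum_mul]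
  apply Finset.sum_congr rfl
  intro i hi
  congr 1
  have himg : ∑ k ∈ (F + G).image (fun k => k - i), f₂ k = ∑ k ∈ F + G, f₂ (k - i) := by
    rw [Finset.sum_image (by intro p _ q _ h; simp only at h; omega)]
  rw [← himg]
  symm
  apply Finset.sum_subset
  · intro j hj
    apply Finset.mem_image.2
    exact ⟨i + j, Finset.add_mem_add hi hj, by ring⟩
  · intro j _ hj
    exact hgG j hj

end two


section bridge

variable (f₁ f₂ : ℤ → ℝ) (h₁ : (Function.support f₁).Finite) (h₂ : (Function.support f₂).Finite)

open Finset Pointwise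

lemma crow'_eq_conv_hash (t : ℤ) :
    conv (hashFn f₁ h₁) (hashFn f₂ h₂) t
      = crow' (hashFn f₁ h₁) (hashFn f₂ h₂) (mH f₁ h₁) (mH f₂ h₂) t := by
  rw [conv_hash_eq_sum, crow']
  symm
  apply Finset.sum_subset
  · intro r hr
    simp only [Lv, Finset.mem_Icc] at hr
    simp only [Finset.mem_Icc]
    omega
  · intro r hr hnr
    simp only [Finset.mem_Icc] at hr
    simp only [Lv, Finset.mem_Icc] at hnr
    have : hashFn f₂ h₂ (t - r) = 0 := hash_zero f₂ h₂ (by omega)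
    show hashFn f₁ h₁ r * hashFn f₂ h₂ (t - r) = 0
    rw [this, mul_zero]

end bridge

end CMH

open CMH Finset Pointwise in
theorem conv_majorized_hash_conv (f₁ f₂ : ℤ → ℝ)
    (h₁ : (Function.support f₁).Finite) (h₂ : (Function.support f₂).Finite)
    (hp₁ : IsPMF f₁) (hp₂ : IsPMF f₂)
    (hlc₁ : HashLogConcave f₁ h₁) (hlc₂ : HashLogConcave f₂ h₂) :
    Majorized (conv f₁ f₂) (conv (hashFn f₁ h₁) (hashFn f₂ h₂)) := by
  classical
  have hm : 0 ≤ mH f₁ h₁ := support_card_pos f₁ h₁ hp₁.2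
  have hn : 0 ≤ mH f₂ h₂ := support_card_pos f₂ h₂ hp₂.2
  have ha : ∀ r, 0 ≤ hashFn f₁ h₁ r := hash_nonneg f₁ h₁ hp₁.1
  have hb : ∀ r, 0 ≤ hashFn f₂ h₂ r := hash_nonneg f₂ h₂ hp₂.1
  have hapos : ∀ r, 0 ≤ r → r ≤ mH f₁ h₁ → 0 < hashFn f₁ h₁ r :=
    fun r h0 h1 => hash_pos f₁ h₁ hp₁.1 h0 h1
  have hbpos : ∀ r, 0 ≤ r → r ≤ mH f₂ h₂ → 0 < hashFn f₂ h₂ r :=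
    fun r h0 h1 => hash_pos f₂ h₂ hp₂.1 h0 h1
  have haR := hash_ratio f₁ h₁ hp₁.1 hlc₁
  have hbR := hash_ratio f₂ h₂ hp₂.1 hlc₂
  have hx : ∀ p q, 0 ≤ p → p < q → q ≤ mH f₁ h₁ → XH f₁ h₁ p < XH f₁ h₁ q :=
    fun p q h0 h1 h2 => XH_strict f₁ h₁ h0 h1 h2
  have hy : ∀ p q, 0 ≤ p → p < q → q ≤ mH f₂ h₂ → XH f₂ h₂ p < XH f₂ h₂ q :=
    fun p q h0 h1 h2 => XH_strict f₂ h₂ h0 h1 h2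
  constructor
  · intro s
    obtain ⟨T, hTcard, hTle⟩ := core_majorize (hashFn f₁ h₁) (hashFn f₂ h₂)
      (mH f₁ h₁) (mH f₂ h₂) hm hn ha hb hapos hbpos haR hbR
      (XH f₁ h₁) (XH f₂ h₂) hx hy s
    refine ⟨T, hTcard, ?_⟩
    have e1 : ∑ z ∈ s, conv f₁ f₂ z
        = ∑ p ∈ (grd (mH f₁ h₁) (mH f₂ h₂)).filter
            (fun p => XH f₁ h₁ p.1 + XH f₂ h₂ p.2 ∈ s),
          W (hashFn f₁ h₁) (hashFn f₂ h₂) p := by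
      rw [← Finset.sum_fiberwise_of_maps_to
        (g := fun p => XH f₁ h₁ p.1 + XH f₂ h₂ p.2) (t := s)
        (fun p hp => (Finset.mem_filter.1 hp).2)
        (W (hashFn f₁ h₁) (hashFn f₂ h₂))]
      apply Finset.sum_congr rfl
      intro z hz
      rw [conv_eq_sum f₁ f₂ h₁ h₂ z]
      apply Finset.sum_congr
      · ext p
        simp only [Finset.mem_filter, grd]
        constructor
        · rintro ⟨h1, h2⟩
          exact ⟨⟨h1, h2 ▸ hz⟩, h2⟩
        · rintro ⟨⟨h1, _⟩, h2⟩
          exact ⟨h1, h2⟩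
      · intro p _
        rfl
    rw [e1]
    refine le_trans hTle (le_of_eq ?_)
    apply Finset.sum_congr rfl
    intro t _
    exact (crow'_eq_conv_hash f₁ f₂ h₁ h₂ t).symm
  · have ht1 : ∑' k, conv f₁ f₂ k
        = (∑ i ∈ h₁.toFinset, f₁ i) * (∑ j ∈ h₂.toFinset, f₂ j) := by
      apply tsum_conv_eq
      · intro i hi
        by_contra h
        exact hi ((Set.Finite.mem_toFinset h₁).2 (Function.mem_support.2 h))
      · intro j hj
        by_contra h
        exact hj ((Set.Finite.mem_toFinset h₂).2 (Function.mem_support.2 h))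
    have ht2 : ∑' k, conv (hashFn f₁ h₁) (hashFn f₂ h₂) k
        = (∑ i ∈ Finset.Icc 0 (mH f₁ h₁), hashFn f₁ h₁ i)
            * (∑ j ∈ Finset.Icc 0 (mH f₂ h₂), hashFn f₂ h₂ j) := by
      apply tsum_conv_eq
      · intro i hi
        apply hash_zero
        intro hc
        exact hi (Finset.mem_Icc.2 ⟨hc.1, hc.2⟩)
      · intro j hj
        apply hash_zero
        intro hc
        exact hj (Finset.mem_Icc.2 ⟨hc.1, hc.2⟩)
    rw [ht1, ht2, sum_hash f₁ h₁, sum_hash f₂ h₂]
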